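/- Let w be a uniformly random word in {bH, bC, oH, oC}^s, processed with the convention that an order letter whose required burger type is not present on the stack leaves the stack unchanged. Then the probability that the last letter of w is oC and that the topmost burger on the stack just before the last letter is a cheeseburger converges to 1/8 as s → ∞; moreover, the deviation of this probability from 1/8 is O(1/√s). -/

import Mathlib

/-!
Burger words over the four-letter alphabet {bH, bC, oH, oC}, processed with the
lenient convention: an order whose required burger type is not on the stack
leaves the stack unchanged.

STATEMENT 13: for a uniformly random word `w ∈ {bH,bC,oH,oC}^s`, the
probability that the last letter of `w` is oC and that the topmost burger on
the stack just before the last letter is a cheeseburger converges to 1/8 as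
`s → ∞`, with deviation from 1/8 of order `O(1/√s)`.
-/

open scoped Classical

inductive Burger : Type
  | ham | cheese
  deriving DecidableEq

instance instFintypeBurger : Fintype Burger :=
  ⟨{.ham, .cheese}, fun x => by cases x <;> simp⟩

inductive Letter : Type
  | bH | bC | oH | oC
  deriving DecidableEq

instance instFintypeLetter : Fintype Letter :=
  ⟨{.bH, .bC, .oH, .oC}, fun x => by cases x <;> simp⟩

/-- Remove the topmost burger of type `b` from the stack (the head of the list
is the top of the stack); `none` if there is no such burger. -/
def removeTopmost (b : Burger) : List Burger → Option (List Burger)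
  | [] => none
  | c :: st => if c = b then some st else (removeTopmost b st).map (c :: ·)

/-- Lenient processing of a single letter: productions push onto the stack,
orders remove the topmost burger of their type if one is present and otherwise
leave the stack unchanged. -/
def stepL (st : List Burger) : Letter → List Burger
  | .bH => .ham :: st
  | .bC => .cheese :: st
  | .oH => (removeTopmost .ham st).getD st
  | .oC => (removeTopmost .cheese st).getD st

/-- The stack after leniently processing the first `i` letters of `w`. -/
def stackLAt (w : List Letter) (i : ℕ) : List Burger :=
  (w.take i).foldl stepL []

/-- The probability that, for a uniformly random word of length `s`, the last
letter is oC and the top burger on the stack just before it is a cheeseburger. -/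
noncomputable def lastFreshCheeseProb (s : ℕ) : ℝ :=
  ((Finset.univ.filter fun w : Fin s → Letter =>
      (List.ofFn w).getLast? = some Letter.oC ∧
      (stackLAt (List.ofFn w) (s - 1)).head? = some Burger.cheese).card : ℝ)
    / (4 : ℝ) ^ s

namespace BurgerAux

/-! ### Signs and the "all suffix sums nonpositive" predicate -/

def sgn : Letter → ℤ
  | .bH => 1
  | .bC => 1
  | .oH => -1
  | .oC => -1

def wsum (w : List Letter) : ℤ := (w.map sgn).sum

/-- All suffixes of `w` have nonpositive sign sum. -/
def Bad (w : List Letter) : Prop := ∀ v, v <:+ w → wsum v ≤ 0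

lemma wsum_nil : wsum [] = 0 := rfl

lemma wsum_cons (a : Letter) (w : List Letter) : wsum (a :: w) = sgn a + wsum w := by
  simp [wsum]

lemma bad_nil : Bad [] := by
  intro v hv
  simp [List.suffix_nil] at hv
  simp [hv, wsum_nil]

lemma bad_cons (a : Letter) (w : List Letter) :
    Bad (a :: w) ↔ (sgn a + wsum w ≤ 0 ∧ Bad w) := by
  constructor
  · intro h
    refine ⟨?_, fun v hv => h v (hv.trans (List.suffix_cons a w))⟩
    have := h (a :: w) (List.suffix_refl _)
    rwa [wsum_cons] at this
  · rintro ⟨h1, h2⟩ v hv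
    rcases List.suffix_cons_iff.mp hv with h | h
    · rw [h, wsum_cons]; exact h1
    · exact h2 v h

lemma bad_wsum_le {w : List Letter} (h : Bad w) : wsum w ≤ 0 :=
  h w (List.suffix_refl _)

lemma neg_len_le_wsum (w : List Letter) : -(w.length : ℤ) ≤ wsum w := by
  induction w with
  | nil => simp [wsum_nil]
  | cons a w ih =>
    rw [wsum_cons, List.length_cons]
    have : -1 ≤ sgn a := by cases a <;> simp [sgn]
    push_cast
    omega

lemma even_wsum_add_len (w : List Letter) : Even (wsum w + w.length) := by
  induction w with
  | nil => simp [wsum_nil]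
  | cons a w ih =>
    rw [wsum_cons, List.length_cons]
    have h : sgn a = 1 ∨ sgn a = -1 := by cases a <;> simp [sgn]
    obtain ⟨m, hm⟩ := ih
    rcases h with h | h
    · exact ⟨m + 1, by rw [h]; push_cast; omega⟩
    · exact ⟨m, by rw [h]; push_cast; omega⟩

/-! ### Stack length is at least any suffix sum -/

lemma removeTopmost_length {b : Burger} : ∀ {st st' : List Burger},
    removeTopmost b st = some st' → st'.length + 1 = st.length := by
  intro st
  induction st with
  | nil => intro st' h; simp [removeTopmost] at h
  | cons c st ih =>
    intro st' h
    rw [removeTopmost] at h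
    by_cases hc : c = b
    · simp [hc] at h; subst h; rfl
    · simp [hc] at h
      obtain ⟨u, hu, hu'⟩ := h
      have := ih hu
      subst hu'
      simp [← this]

lemma stepL_length (st : List Burger) (l : Letter) :
    (st.length : ℤ) + sgn l ≤ ((stepL st l).length : ℤ) := by
  cases l <;> simp only [stepL, sgn]
  · simp
  · simp
  all_goals {
    cases h : removeTopmost _ st with
    | none => simp
    | some st' =>
      have := removeTopmost_length h
      simp [h]
      omega }

lemma foldl_length (w : List Letter) : ∀ st : List Burger,
    (st.length : ℤ) + wsum w ≤ ((w.foldl stepL st).length : ℤ) := by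
  induction w with
  | nil => intro st; simp [wsum_nil]
  | cons a w ih =>
    intro st
    rw [wsum_cons, List.foldl_cons]
    have h1 := stepL_length st a
    have h2 := ih (stepL st a)
    omega

lemma bad_of_empty {w : List Letter} (h : w.foldl stepL [] = []) : Bad w := by
  intro v hv
  obtain ⟨u, hu⟩ := hv
  have hfold : (u ++ v).foldl stepL [] = [] := by rw [hu]; exact h
  rw [List.foldl_append] at hfold
  have := foldl_length v (u.foldl stepL [])
  rw [hfold] at this
  simp at this
  omega

/-! ### Counting -/

noncomputable def cnt (n : ℕ) (P : List Letter → Prop) : ℕ :=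
  (Finset.univ.filter fun w : Fin n → Letter => P (List.ofFn w)).card

lemma letter_sum (f : Letter → ℕ) : ∑ a : Letter, f a = f .bH + f .bC + f .oH + f .oC := by
  have : (Finset.univ : Finset Letter) = {.bH, .bC, .oH, .oC} := by decide
  rw [this]
  simp [Finset.sum_insert, Finset.mem_insert]
  ring

lemma cnt_succ (n : ℕ) (P : List Letter → Prop) :
    cnt (n + 1) P = ∑ a : Letter, cnt n (fun w => P (a :: w)) := by
  unfold cnt
  rw [Finset.card_filter]
  rw [← Equiv.sum_comp (Fin.consEquiv fun _ : Fin (n + 1) => Letter)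
      (fun w => if P (List.ofFn w) then 1 else 0)]
  rw [Fintype.sum_prod_type]
  refine Finset.sum_congr rfl fun a _ => ?_
  rw [Finset.card_filter]
  refine Finset.sum_congr rfl fun v _ => ?_
  have harg : List.ofFn ((Fin.consEquiv fun _ : Fin (n + 1) => Letter) (a, v))
      = a :: List.ofFn v := by
    rw [List.ofFn_succ]
    simp [Fin.consEquiv]
  rw [harg]

lemma card_filter_iff {α : Type*} [Fintype α] {p q : α → Prop}
    (hp : DecidablePred p) (hq : DecidablePred q) (h : ∀ x, p x ↔ q x) :
    (@Finset.filter _ p hp Finset.univ).card = (@Finset.filter _ q hq Finset.univ).card := by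
  congr 1
  ext x
  rw [Finset.mem_filter, Finset.mem_filter]
  exact and_congr Iff.rfl (h x)

lemma cnt_split (n : ℕ) (P Q : List Letter → Prop) :
    cnt n (fun w => P w ∧ Q w) + cnt n (fun w => P w ∧ ¬ Q w) = cnt n P := by
  unfold cnt
  have h := Finset.card_filter_add_card_filter_not
    (s := (Finset.univ : Finset (Fin n → Letter)).filter fun w => P (List.ofFn w))
    (p := fun w => Q (List.ofFn w))
  simp only [Finset.filter_filter] at h
  convert h using 2 <;> exact card_filter_iff _ _ fun x => Iff.rfl

lemma cnt_mono (n : ℕ) (P Q : List Letter → Prop)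
    (h : ∀ w : List Letter, w.length = n → P w → Q w) : cnt n P ≤ cnt n Q := by
  unfold cnt
  apply Finset.card_le_card
  intro w hw
  simp only [Finset.mem_filter, Finset.mem_univ, true_and] at *
  exact h (List.ofFn w) (by simp) hw

lemma cnt_congr (n : ℕ) (P Q : List Letter → Prop)
    (h : ∀ w : List Letter, w.length = n → (P w ↔ Q w)) : cnt n P = cnt n Q := by
  unfold cnt
  congr 1
  apply Finset.filter_congr
  intro w _
  simpa using h (List.ofFn w) (by simp)

lemma cnt_zero_of (n : ℕ) (P : List Letter → Prop)
    (h : ∀ w : List Letter, w.length = n → ¬ P w) : cnt n P = 0 := by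
  unfold cnt
  rw [Finset.card_eq_zero, Finset.filter_eq_empty_iff]
  intro w _
  simpa using h (List.ofFn w) (by simp)

lemma cnt_total (n : ℕ) : cnt n (fun _ => True) = 4 ^ n := by
  unfold cnt
  rw [Finset.filter_true]
  rw [Finset.card_univ, Fintype.card_fun]
  norm_num [show Fintype.card Letter = 4 from rfl]

noncomputable def c (n : ℕ) (t : ℤ) : ℕ := cnt n (fun w => Bad w ∧ wsum w = t)

noncomputable def b (n : ℕ) : ℕ := cnt n Bad

lemma c_support (n : ℕ) (t : ℤ) (h : 0 < t ∨ t < -(n : ℤ) ∨ ¬ Even (t + n)) :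
    c n t = 0 := by
  apply cnt_zero_of
  rintro w hl ⟨hb, hs⟩
  have h1 := bad_wsum_le hb
  have h2 := neg_len_le_wsum w
  have h3 := even_wsum_add_len w
  rw [hl] at h2 h3
  rcases h with h | h | h
  · omega
  · omega
  · rw [hs] at h3; exact h h3

lemma c_rec (n : ℕ) (t : ℤ) (ht : t ≤ 0) :
    c (n + 1) t = 2 * c n (t - 1) + 2 * c n (t + 1) := by
  unfold c
  rw [cnt_succ]
  have h : ∀ a : Letter, cnt n (fun w => Bad (a :: w) ∧ wsum (a :: w) = t)
      = cnt n (fun w => Bad w ∧ wsum w = t - sgn a) := by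
    intro a
    apply cnt_congr
    intro w _
    rw [bad_cons, wsum_cons]
    constructor
    · rintro ⟨⟨_, hb⟩, hs⟩; exact ⟨hb, by omega⟩
    · rintro ⟨hb, hs⟩; exact ⟨⟨by omega, hb⟩, by omega⟩
  simp only [h]
  rw [letter_sum (fun a => cnt n (fun w => Bad w ∧ wsum w = t - sgn a))]
  have e1 : ∀ x y : ℤ, x = y →
      cnt n (fun w => Bad w ∧ wsum w = x) = cnt n (fun w => Bad w ∧ wsum w = y) := by
    rintro x y rfl; rfl
  rw [e1 (t - sgn .bH) (t - 1) (by simp [sgn]), e1 (t - sgn .bC) (t - 1) (by simp [sgn]),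
    e1 (t - sgn .oH) (t + 1) (by simp [sgn]), e1 (t - sgn .oC) (t + 1) (by simp [sgn])]
  ring

lemma c_zero_zero : c 0 0 = 1 := by
  unfold c
  rw [cnt_congr 0 _ (fun _ => True)]
  · exact cnt_total 0
  · intro w hw
    rw [List.length_eq_zero_iff] at hw
    subst hw
    simp only [iff_true]
    exact ⟨bad_nil, rfl⟩

lemma c_closed : ∀ (n : ℕ) (t : ℤ) (k : ℕ), t ≤ 0 → -t ≤ (n : ℤ) → (n : ℤ) - t = 2 * k →
    c n t + 2 ^ n * n.choose (k + 1) = 2 ^ n * n.choose k := by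
  intro n
  induction n with
  | zero =>
    intro t k ht h1 h2
    have ht0 : t = 0 := by omega
    have hk : k = 0 := by omega
    subst ht0; subst hk
    rw [c_zero_zero]
    simp
  | succ n ih =>
    intro t k ht h1 h2
    rw [c_rec n t ht]
    have hk1 : 1 ≤ k := by omega
    obtain ⟨j, rfl⟩ : ∃ j, k = j + 1 := ⟨k - 1, by omega⟩
    have p1 : 2 ^ (n + 1) * (n + 1).choose (j + 1 + 1)
        = 2 * (2 ^ n * n.choose (j + 1)) + 2 * (2 ^ n * n.choose (j + 1 + 1)) := by
      rw [Nat.choose_succ_succ]; ring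
    have p2 : 2 ^ (n + 1) * (n + 1).choose (j + 1)
        = 2 * (2 ^ n * n.choose j) + 2 * (2 ^ n * n.choose (j + 1)) := by
      rw [Nat.choose_succ_succ]; ring
    rcases eq_or_lt_of_le ht with h0 | hneg
    · -- t = 0
      subst h0
      have hn : (n : ℤ) = 2 * j + 1 := by omega
      have hc1 : c n 1 = 0 := c_support n 1 (Or.inl (by norm_num))
      have ihm : c n (-1) + 2 ^ n * n.choose (j + 1 + 1) = 2 ^ n * n.choose (j + 1) := by
        have := ih (-1) (j + 1) (by norm_num) (by omega) (by omega)
        simpa using this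
      have hsymm : n.choose j = n.choose (j + 1) := by
        have hn' : n = 2 * j + 1 := by omega
        have := Nat.choose_symm (n := n) (k := j + 1) (by omega)
        rw [show n - (j + 1) = j by omega] at this
        omega
      have hsymm' : 2 ^ n * n.choose j = 2 ^ n * n.choose (j + 1) := by rw [hsymm]
      rw [show (0 : ℤ) - 1 = -1 by norm_num, show (0 : ℤ) + 1 = 1 by norm_num]
      omega
    · -- t ≤ -1
      have ht1 : t ≤ -1 := by omega
      by_cases hA : -t ≤ (n : ℤ) - 1
      · -- interior case
        have ih1 : c n (t - 1) + 2 ^ n * n.choose (j + 1 + 1) = 2 ^ n * n.choose (j + 1) := by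
          have := ih (t - 1) (j + 1) (by omega) (by omega) (by omega)
          simpa using this
        have ih2 : c n (t + 1) + 2 ^ n * n.choose (j + 1) = 2 ^ n * n.choose j := by
          have := ih (t + 1) j (by omega) (by omega) (by omega)
          simpa using this
        omega
      · -- boundary case : -t = n + 1 (note -t = n is impossible by parity)
        have hpar : ¬ (-t = (n : ℤ)) := by
          intro hcon
          omega
        have hB : -t = (n : ℤ) + 1 := by omega
        have hj : j = n := by omega
        rw [hj]
        have hz : c n (t - 1) = 0 :=
          c_support n (t - 1) (Or.inr (Or.inl (by omega)))
        have ih2 : c n (t + 1) + 2 ^ n * n.choose (n + 1) = 2 ^ n * n.choose n := by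
          have := ih (t + 1) n (by omega) (by omega) (by omega)
          simpa using this
        have ch1 : n.choose (n + 1) = 0 := Nat.choose_eq_zero_of_lt (by omega)
        have ch2 : (n + 1).choose (n + 1 + 1) = 0 := Nat.choose_eq_zero_of_lt (by omega)
        have ch3 : n.choose n = 1 := Nat.choose_self n
        have ch4 : (n + 1).choose (n + 1) = 1 := Nat.choose_self (n + 1)
        rw [ch1, ch3] at ih2
        rw [hz, ch2, ch4]
        have hp : (2 : ℕ) ^ (n + 1) = 2 * 2 ^ n := by ring
        simp at ih2 ⊢
        omega

lemma b_rec (n : ℕ) : b (n + 1) + 2 * c n 0 = 4 * b n := by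
  have hsplit : c n 0 + cnt n (fun w => Bad w ∧ wsum w ≤ -1) = b n := by
    unfold c b cnt
    have h := Finset.card_filter_add_card_filter_not
      (s := (Finset.univ : Finset (Fin n → Letter)).filter fun w => Bad (List.ofFn w))
      (p := fun w => wsum (List.ofFn w) = 0)
    simp only [Finset.filter_filter] at h
    have e2 : (Finset.univ.filter fun w : Fin n → Letter =>
          Bad (List.ofFn w) ∧ ¬ wsum (List.ofFn w) = 0)
        = Finset.univ.filter fun w : Fin n → Letter =>
          Bad (List.ofFn w) ∧ wsum (List.ofFn w) ≤ -1 := by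
      apply Finset.filter_congr
      intro w _
      constructor
      · rintro ⟨hb, hs⟩
        exact ⟨hb, by have := bad_wsum_le hb; omega⟩
      · rintro ⟨hb, hs⟩
        exact ⟨hb, by omega⟩
    rw [e2] at h
    convert h using 2 <;> exact card_filter_iff _ _ fun x => Iff.rfl
  have hb1 : b (n + 1) = 2 * cnt n (fun w => Bad w ∧ wsum w ≤ -1) + 2 * b n := by
    unfold b
    rw [cnt_succ]
    rw [letter_sum (fun a => cnt n (fun w => Bad (a :: w)))]
    have hprod : ∀ a : Letter, sgn a = 1 →
        cnt n (fun w => Bad (a :: w)) = cnt n (fun w => Bad w ∧ wsum w ≤ -1) := by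
      intro a ha
      apply cnt_congr
      intro w _
      rw [bad_cons, ha]
      constructor
      · rintro ⟨h1, h2⟩; exact ⟨h2, by omega⟩
      · rintro ⟨h1, h2⟩; exact ⟨by omega, h1⟩
    have hord : ∀ a : Letter, sgn a = -1 →
        cnt n (fun w => Bad (a :: w)) = cnt n Bad := by
      intro a ha
      apply cnt_congr
      intro w _
      rw [bad_cons, ha]
      constructor
      · rintro ⟨h1, h2⟩; exact h2
      · intro h1; exact ⟨by have := bad_wsum_le h1; omega, h1⟩
    rw [hprod .bH rfl, hprod .bC rfl, hord .oH rfl, hord .oC rfl]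
    ring
  omega

lemma b_zero : b 0 = 1 := by
  unfold b
  rw [cnt_congr 0 _ (fun _ => True)]
  · exact cnt_total 0
  · intro w hw
    rw [List.length_eq_zero_iff] at hw
    subst hw
    simp only [iff_true]
    exact bad_nil

lemma b_closed (n : ℕ) : b n = 2 ^ n * n.choose ((n + 1) / 2) := by
  induction n with
  | zero => simpa using b_zero
  | succ n ih =>
    have hrec := b_rec n
    rcases Nat.even_or_odd n with ⟨m, hm⟩ | ⟨m, hm⟩
    · -- n = 2m even
      subst hm
      have hc : c (m + m) 0 + 2 ^ (m + m) * (m + m).choose (m + 1)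
          = 2 ^ (m + m) * (m + m).choose m := by
        have := c_closed (m + m) 0 m (le_refl 0) (by push_cast; omega) (by push_cast; omega)
        simpa using this
      have hd1 : (m + m + 1) / 2 = m := by omega
      have hd2 : (m + m + 1 + 1) / 2 = m + 1 := by omega
      rw [hd1] at ih
      rw [hd2]
      have hpasc : (m + m + 1).choose (m + 1) = (m + m).choose m + (m + m).choose (m + 1) := by
        exact Nat.choose_succ_succ (m + m) m
      have hgoal : 2 ^ (m + m + 1) * (m + m + 1).choose (m + 1)
          = 2 * (2 ^ (m + m) * (m + m).choose m) + 2 * (2 ^ (m + m) * (m + m).choose (m + 1)) := by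
        rw [hpasc]; ring
      omega
    · -- n = 2m + 1 odd
      subst hm
      have hc : c (2 * m + 1) 0 = 0 := by
        apply c_support
        right; right
        intro hcon
        obtain ⟨r, hr⟩ := hcon
        omega
      have hd1 : (2 * m + 1 + 1) / 2 = m + 1 := by omega
      have hd2 : (2 * m + 1 + 1 + 1) / 2 = m + 1 := by omega
      rw [hd1] at ih
      rw [hd2]
      have hpasc : (2 * m + 2).choose (m + 1)
          = (2 * m + 1).choose m + (2 * m + 1).choose (m + 1) := by
        exact Nat.choose_succ_succ (2 * m + 1) m
      have hsymm : (2 * m + 1).choose m = (2 * m + 1).choose (m + 1) := by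
        have := Nat.choose_symm (n := 2 * m + 1) (k := m + 1) (by omega)
        rw [show 2 * m + 1 - (m + 1) = m by omega] at this
        omega
      have hgoal : 2 ^ (2 * m + 1 + 1) * (2 * m + 1 + 1).choose (m + 1)
          = 4 * (2 ^ (2 * m + 1) * (2 * m + 1).choose (m + 1)) := by
        rw [show 2 * m + 1 + 1 = 2 * m + 2 from rfl, hpasc, ← hsymm]
        rw [hsymm]
        ring
      omega

/-! ### Central binomial bound -/

lemma centralBinom_sq_bound (m : ℕ) : (3 * m + 1) * (m.centralBinom) ^ 2 ≤ 16 ^ m := by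
  induction m with
  | zero => simp [Nat.centralBinom]
  | succ m ih =>
    have key := Nat.succ_mul_centralBinom_succ m
    have h1 : (m + 1) ^ 2 * (m + 1).centralBinom ^ 2 = 4 * (2 * m + 1) ^ 2 * m.centralBinom ^ 2 := by
      have := congrArg (· ^ 2) key
      ring_nf at this ⊢
      nlinarith [this]
    have h2 : (3 * m + 4) * (2 * m + 1) ^ 2 ≤ 4 * (3 * m + 1) * (m + 1) ^ 2 := by nlinarith
    have h3 : (m + 1) ^ 2 * ((3 * m + 4) * (m + 1).centralBinom ^ 2) ≤ (m + 1) ^ 2 * 16 ^ (m + 1) := by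
      calc (m + 1) ^ 2 * ((3 * m + 4) * (m + 1).centralBinom ^ 2)
          = (3 * m + 4) * ((m + 1) ^ 2 * (m + 1).centralBinom ^ 2) := by ring
        _ = (3 * m + 4) * (4 * (2 * m + 1) ^ 2 * m.centralBinom ^ 2) := by rw [h1]
        _ = ((3 * m + 4) * (2 * m + 1) ^ 2) * (4 * m.centralBinom ^ 2) := by ring
        _ ≤ (4 * (3 * m + 1) * (m + 1) ^ 2) * (4 * m.centralBinom ^ 2) :=
            Nat.mul_le_mul_right _ h2
        _ = (m + 1) ^ 2 * (16 * ((3 * m + 1) * m.centralBinom ^ 2)) := by ring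
        _ ≤ (m + 1) ^ 2 * (16 * 16 ^ m) := by
            exact Nat.mul_le_mul_left _ (Nat.mul_le_mul_left _ ih)
        _ = (m + 1) ^ 2 * 16 ^ (m + 1) := by ring
    have h4 := Nat.le_of_mul_le_mul_left h3 (by positivity)
    have h5 : 3 * (m + 1) + 1 = 3 * m + 4 := by ring
    rw [h5]
    exact h4

/-- The key bound: `(n+1) * B n ^ 2 ≤ 2 * 4 ^ n` where `B n = choose n ⌈n/2⌉`. -/
lemma choose_half_sq_bound (n : ℕ) : (n + 1) * (n.choose ((n + 1) / 2)) ^ 2 ≤ 2 * 4 ^ n := by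
  rcases Nat.even_or_odd n with ⟨m, hm⟩ | ⟨m, hm⟩
  · subst hm
    have hd : (m + m + 1) / 2 = m := by omega
    rw [hd]
    have hcb : (m + m).choose m = m.centralBinom := by
      unfold Nat.centralBinom
      congr 1
      omega
    rw [hcb]
    have h1 := centralBinom_sq_bound m
    have h4 : (4 : ℕ) ^ (m + m) = 16 ^ m := by
      rw [show (16 : ℕ) = 4 * 4 from rfl, Nat.mul_pow, ← pow_add]
    rw [h4]
    nlinarith [sq_nonneg m.centralBinom]
  · subst hm
    have hd : (2 * m + 1 + 1) / 2 = m + 1 := by omega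
    rw [hd]
    have hcb : 2 * (2 * m + 1).choose (m + 1) = (m + 1).centralBinom := by
      unfold Nat.centralBinom
      have hpasc : (2 * m + 2).choose (m + 1)
          = (2 * m + 1).choose m + (2 * m + 1).choose (m + 1) :=
        Nat.choose_succ_succ (2 * m + 1) m
      have hsymm : (2 * m + 1).choose m = (2 * m + 1).choose (m + 1) := by
        have := Nat.choose_symm (n := 2 * m + 1) (k := m + 1) (by omega)
        rw [show 2 * m + 1 - (m + 1) = m by omega] at this
        omega
      rw [show 2 * (m + 1) = 2 * m + 2 by ring, hpasc, hsymm]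
      ring
    have h1 := centralBinom_sq_bound (m + 1)
    have hsq : (m + 1).centralBinom ^ 2 = 4 * ((2 * m + 1).choose (m + 1)) ^ 2 := by
      rw [← hcb]; ring
    have hA : (4 : ℕ) ^ (2 * m + 1) = 4 * 16 ^ m := by
      rw [pow_succ, pow_mul]
      norm_num
      ring
    have k1 : (2 * m + 1 + 1) * ((2 * m + 1).choose (m + 1)) ^ 2 * 4 ≤ 16 * 16 ^ m := by
      calc (2 * m + 1 + 1) * ((2 * m + 1).choose (m + 1)) ^ 2 * 4
          ≤ (3 * (m + 1) + 1) * (4 * ((2 * m + 1).choose (m + 1)) ^ 2) := by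
            nlinarith [sq_nonneg ((2 * m + 1).choose (m + 1))]
        _ = (3 * (m + 1) + 1) * (m + 1).centralBinom ^ 2 := by rw [hsq]
        _ ≤ 16 ^ (m + 1) := h1
        _ = 16 * 16 ^ m := by ring
    have k1' : (2 * m + 1 + 1) * ((2 * m + 1).choose (m + 1)) ^ 2 * 4
        ≤ (4 * 16 ^ m) * 4 := by
      calc (2 * m + 1 + 1) * ((2 * m + 1).choose (m + 1)) ^ 2 * 4 ≤ 16 * 16 ^ m := k1
        _ = (4 * 16 ^ m) * 4 := by ring
    have k5 : (2 * m + 1 + 1) * ((2 * m + 1).choose (m + 1)) ^ 2 ≤ 4 * 16 ^ m :=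
      Nat.le_of_mul_le_mul_right k1' (by norm_num)
    calc (2 * m + 1 + 1) * ((2 * m + 1).choose (m + 1)) ^ 2 ≤ 4 * 16 ^ m := k5
      _ ≤ 8 * 16 ^ m := Nat.mul_le_mul_right _ (by norm_num)
      _ = 2 * 4 ^ (2 * m + 1) := by rw [hA]; ring

/-! ### Ham/cheese symmetry -/

def swapB : Burger → Burger
  | .ham => .cheese
  | .cheese => .ham

def swapL : Letter → Letter
  | .bH => .bC
  | .bC => .bH
  | .oH => .oC
  | .oC => .oH

lemma swapB_involutive : Function.Involutive swapB := by
  intro b; cases b <;> rfl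

lemma swapL_involutive : Function.Involutive swapL := by
  intro l; cases l <;> rfl

lemma removeTopmost_swap (b : Burger) : ∀ st : List Burger,
    removeTopmost (swapB b) (st.map swapB) = (removeTopmost b st).map (List.map swapB) := by
  intro st
  induction st with
  | nil => rfl
  | cons c st ih =>
    rw [List.map_cons, removeTopmost, removeTopmost]
    by_cases hc : c = b
    · subst hc; simp
    · have hc' : ¬ swapB c = swapB b := fun h => hc (swapB_involutive.injective h)
      simp only [if_neg hc, if_neg hc', ih]
      cases removeTopmost b st <;> simp

lemma stepL_swap (st : List Burger) (l : Letter) :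
    stepL (st.map swapB) (swapL l) = (stepL st l).map swapB := by
  have hh := removeTopmost_swap .ham st
  have hc := removeTopmost_swap .cheese st
  simp only [swapB] at hh hc
  cases l
  · rfl
  · rfl
  · simp only [swapL, stepL, hh]
    cases removeTopmost Burger.ham st <;> simp
  · simp only [swapL, stepL, hc]
    cases removeTopmost Burger.cheese st <;> simp

lemma foldl_swap (w : List Letter) : ∀ st : List Burger,
    (w.map swapL).foldl stepL (st.map swapB) = (w.foldl stepL st).map swapB := by
  induction w with
  | nil => intro st; rfl
  | cons a w ih =>
    intro st
    rw [List.map_cons, List.foldl_cons, List.foldl_cons, stepL_swap]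
    exact ih _

lemma cnt_swap (n : ℕ) (P : List Letter → Prop) :
    cnt n (fun w => P (w.map swapL)) = cnt n P := by
  unfold cnt
  apply Finset.card_bij' (i := fun (v : Fin n → Letter) _ => swapL ∘ v)
    (j := fun (v : Fin n → Letter) _ => swapL ∘ v)
  · intro v hv
    simp only [Finset.mem_filter, Finset.mem_univ, true_and] at hv ⊢
    rw [← List.map_ofFn]
    exact hv
  · intro v hv
    simp only [Finset.mem_filter, Finset.mem_univ, true_and] at hv ⊢
    have e : (List.ofFn (swapL ∘ v)).map swapL = List.ofFn v := by
      rw [List.map_ofFn]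
      exact congrArg List.ofFn (funext fun i => swapL_involutive (v i))
    rw [e]
    exact hv
  · intro v _
    exact funext fun i => swapL_involutive (v i)
  · intro v _
    exact funext fun i => swapL_involutive (v i)

noncomputable def qc (n : ℕ) : ℕ :=
  cnt n (fun w => (w.foldl stepL []).head? = some Burger.cheese)
noncomputable def qh (n : ℕ) : ℕ :=
  cnt n (fun w => (w.foldl stepL []).head? = some Burger.ham)
noncomputable def qe (n : ℕ) : ℕ :=
  cnt n (fun w => (w.foldl stepL []).head? = none)

lemma qc_eq_qh (n : ℕ) : qc n = qh n := by
  unfold qc qh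
  rw [← cnt_swap n (fun w => (w.foldl stepL []).head? = some Burger.ham)]
  apply cnt_congr
  intro w _
  have hf : (w.map swapL).foldl stepL [] = (w.foldl stepL []).map swapB := by
    have := foldl_swap w []
    simpa using this
  rw [hf, List.head?_map]
  cases (w.foldl stepL []).head? with
  | none => simp
  | some b => cases b <;> simp [swapB]

lemma qsum (n : ℕ) : qc n + qh n + qe n = 4 ^ n := by
  have h1 := cnt_split n (fun _ => True)
    (fun w => (w.foldl stepL []).head? = some Burger.cheese)
  have h2 := cnt_split n
    (fun w => ¬ (w.foldl stepL []).head? = some Burger.cheese)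
    (fun w => (w.foldl stepL []).head? = some Burger.ham)
  have e1 : cnt n (fun w => True ∧ (w.foldl stepL []).head? = some Burger.cheese)
      = qc n := by
    apply cnt_congr; intro w _; simp
  have e2 : cnt n (fun w => True ∧ ¬ (w.foldl stepL []).head? = some Burger.cheese)
      = cnt n (fun w => ¬ (w.foldl stepL []).head? = some Burger.cheese) := by
    apply cnt_congr; intro w _; simp
  have e3 : cnt n (fun w => ¬ (w.foldl stepL []).head? = some Burger.cheese ∧
      (w.foldl stepL []).head? = some Burger.ham) = qh n := by
    apply cnt_congr; intro w _
    constructor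
    · rintro ⟨_, h⟩; exact h
    · intro h; exact ⟨by rw [h]; simp, h⟩
  have e4 : cnt n (fun w => ¬ (w.foldl stepL []).head? = some Burger.cheese ∧
      ¬ (w.foldl stepL []).head? = some Burger.ham) = qe n := by
    apply cnt_congr; intro w _
    constructor
    · rintro ⟨h1, h2⟩
      cases ho : (w.foldl stepL []).head? with
      | none => rfl
      | some b => cases b
                  · exact absurd ho h2
                  · exact absurd ho h1
    · intro h
      rw [h]
      simp
  have ht := cnt_total n
  unfold qc qh qe at *
  omega

lemma qe_le_b (n : ℕ) : qe n ≤ b n := by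
  unfold qe b
  apply cnt_mono
  intro w _ h
  exact bad_of_empty (List.head?_eq_none_iff.mp h)

/-! ### The main count -/

lemma main_count (n : ℕ) :
    (Finset.univ.filter fun w : Fin (n + 1) → Letter =>
      (List.ofFn w).getLast? = some Letter.oC ∧
      (stackLAt (List.ofFn w) (n + 1 - 1)).head? = some Burger.cheese).card = qc n := by
  rw [Finset.card_filter]
  rw [← Equiv.sum_comp (Fin.snocEquiv fun _ : Fin (n + 1) => Letter)
      (fun w => if ((List.ofFn w).getLast? = some Letter.oC ∧
        (stackLAt (List.ofFn w) (n + 1 - 1)).head? = some Burger.cheese) then 1 else 0)]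
  rw [Fintype.sum_prod_type]
  have hterm : ∀ (x : Letter) (v : Fin n → Letter),
      (if ((List.ofFn ((Fin.snocEquiv fun _ : Fin (n + 1) => Letter) (x, v))).getLast?
            = some Letter.oC ∧
        (stackLAt (List.ofFn ((Fin.snocEquiv fun _ : Fin (n + 1) => Letter) (x, v)))
            (n + 1 - 1)).head? = some Burger.cheese) then (1 : ℕ) else 0)
      = if (x = Letter.oC ∧
          ((List.ofFn v).foldl stepL []).head? = some Burger.cheese) then 1 else 0 := by
    intro x v
    have hofn : List.ofFn ((Fin.snocEquiv fun _ : Fin (n + 1) => Letter) (x, v))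
        = (List.ofFn v) ++ [x] := by
      rw [List.ofFn_succ']
      rw [List.concat_eq_append]
      congr 1
      · exact congrArg List.ofFn (funext fun i => by simp [Fin.snocEquiv])
      · simp [Fin.snocEquiv]
    rw [hofn]
    apply if_congr _ rfl rfl
    have hlast : ((List.ofFn v) ++ [x]).getLast? = some x := by
      rw [← List.concat_eq_append]
      simp
    have hstack : stackLAt ((List.ofFn v) ++ [x]) (n + 1 - 1) = (List.ofFn v).foldl stepL [] := by
      unfold stackLAt
      rw [show n + 1 - 1 = n from rfl, List.take_left' (by simp)]
    rw [hlast, hstack]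
    simp only [Option.some_inj]
  simp only [hterm]
  rw [letter_sum (fun x => ∑ v : Fin n → Letter,
    if (x = Letter.oC ∧ ((List.ofFn v).foldl stepL []).head? = some Burger.cheese)
    then 1 else 0)]
  have hz : ∀ x : Letter, x ≠ Letter.oC →
      (∑ v : Fin n → Letter,
        if (x = Letter.oC ∧ ((List.ofFn v).foldl stepL []).head? = some Burger.cheese)
        then (1 : ℕ) else 0) = 0 := by
    intro x hx
    apply Finset.sum_eq_zero
    intro v _
    rw [if_neg]
    rintro ⟨h, _⟩
    exact hx h
  rw [hz .bH (by simp), hz .bC (by simp), hz .oH (by simp)]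
  unfold qc cnt
  rw [Finset.card_filter]
  simp only [zero_add, add_zero]
  apply Finset.sum_congr rfl
  intro v _
  by_cases hv : ((List.ofFn v).foldl stepL []).head? = some Burger.cheese
  · rw [if_pos (⟨trivial, hv⟩ : True ∧ _), if_pos hv]
  · rw [if_neg (fun h : True ∧ _ => hv h.2), if_neg hv]

/-! ### Real-number bounds -/

lemma ratio_bound (n : ℕ) : (b n : ℝ) / 4 ^ n ≤ Real.sqrt 2 / Real.sqrt (n + 1) := by
  rw [b_closed]
  have h2 : (((2 : ℕ) ^ n * n.choose ((n + 1) / 2) : ℕ) : ℝ) / 4 ^ n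
      = (n.choose ((n + 1) / 2) : ℝ) / 2 ^ n := by
    have h4 : (4 : ℝ) ^ n = 2 ^ n * 2 ^ n := by
      rw [← mul_pow]; norm_num
    push_cast
    rw [h4]
    field_simp
  rw [h2]
  have hkey : ((n.choose ((n + 1) / 2) : ℝ) / 2 ^ n) ^ 2 ≤ 2 / ((n : ℝ) + 1) := by
    have hn : ((n : ℝ) + 1) * (n.choose ((n + 1) / 2) : ℝ) ^ 2 ≤ 2 * 4 ^ n := by
      exact_mod_cast choose_half_sq_bound n
    rw [div_pow, div_le_div_iff₀ (by positivity) (by positivity)]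
    have h4 : ((2 : ℝ) ^ n) ^ 2 = 4 ^ n := by
      rw [← pow_mul, mul_comm, pow_mul]; norm_num
    rw [h4]
    nlinarith [hn]
  have h0 : (0 : ℝ) ≤ (n.choose ((n + 1) / 2) : ℝ) / 2 ^ n := by positivity
  calc (n.choose ((n + 1) / 2) : ℝ) / 2 ^ n
      = Real.sqrt (((n.choose ((n + 1) / 2) : ℝ) / 2 ^ n) ^ 2) := (Real.sqrt_sq h0).symm
    _ ≤ Real.sqrt (2 / ((n : ℝ) + 1)) := Real.sqrt_le_sqrt hkey
    _ = Real.sqrt 2 / Real.sqrt ((n : ℝ) + 1) := Real.sqrt_div (by norm_num) _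

lemma dev_bound (n : ℕ) :
    |lastFreshCheeseProb (n + 1) - 1 / 8| ≤ 1 / Real.sqrt ((n : ℝ) + 1) := by
  have hprob : lastFreshCheeseProb (n + 1) = (qc n : ℝ) / 4 ^ (n + 1) := by
    unfold lastFreshCheeseProb
    rw [main_count n]
  have hqsum := qsum n
  rw [qc_eq_qh] at hqsum
  -- 2 * qh n + qe n = 4 ^ n  and qc n = qh n
  have hqc : (qc n : ℝ) = ((4 : ℝ) ^ n - qe n) / 2 := by
    rw [qc_eq_qh]
    have : 2 * (qh n : ℝ) + qe n = 4 ^ n := by exact_mod_cast (by omega : 2 * qh n + qe n = 4 ^ n)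
    linarith
  have hdiff : lastFreshCheeseProb (n + 1) - 1 / 8 = -((qe n : ℝ) / (8 * 4 ^ n)) := by
    rw [hprob, hqc]
    have h4 : (4 : ℝ) ^ (n + 1) = 4 * 4 ^ n := by ring
    rw [h4]
    have hp : (0 : ℝ) < 4 ^ n := by positivity
    field_simp
    ring
  rw [hdiff, abs_neg, abs_of_nonneg (by positivity)]
  have hqe : (qe n : ℝ) ≤ b n := by exact_mod_cast qe_le_b n
  have hsqrt2 : Real.sqrt 2 ≤ 2 := by
    nlinarith [Real.sq_sqrt (by norm_num : (0 : ℝ) ≤ 2), Real.sqrt_nonneg (2 : ℝ)]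
  have hsp : 0 < Real.sqrt ((n : ℝ) + 1) := Real.sqrt_pos.mpr (by positivity)
  calc (qe n : ℝ) / (8 * 4 ^ n) = ((qe n : ℝ) / 4 ^ n) / 8 := by ring
    _ ≤ ((b n : ℝ) / 4 ^ n) / 8 := by gcongr
    _ ≤ (Real.sqrt 2 / Real.sqrt ((n : ℝ) + 1)) / 8 := by
        have := ratio_bound n
        linarith
    _ ≤ 1 / Real.sqrt ((n : ℝ) + 1) := by
        rw [div_div, div_le_div_iff₀ (by positivity) hsp]
        nlinarith [hsp, hsqrt2, Real.sqrt_nonneg (2 : ℝ)]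

end BurgerAux


theorem lastFreshCheeseProb_tendsto :
    Filter.Tendsto lastFreshCheeseProb Filter.atTop (nhds (1 / 8)) ∧
    ∃ c : ℝ, 0 < c ∧ ∀ s : ℕ, 1 ≤ s →
      |lastFreshCheeseProb s - 1 / 8| ≤ c / Real.sqrt s := by
  have hdev : ∀ s : ℕ, 1 ≤ s → |lastFreshCheeseProb s - 1 / 8| ≤ 1 / Real.sqrt s := by
    intro s hs
    obtain ⟨n, rfl⟩ : ∃ n, s = n + 1 := ⟨s - 1, by omega⟩
    have h := BurgerAux.dev_bound n
    have hc : ((n : ℝ) + 1) = ((n + 1 : ℕ) : ℝ) := by push_cast; ring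
    rwa [hc] at h
  have hsqatTop : Filter.Tendsto (fun s : ℕ => Real.sqrt s) Filter.atTop Filter.atTop := by
    rw [Filter.tendsto_atTop_atTop]
    intro bnd
    obtain ⟨k, hk⟩ := exists_nat_ge (bnd ^ 2)
    refine ⟨k, fun a ha => ?_⟩
    have h1 : (bnd ^ 2 : ℝ) ≤ a := le_trans hk (by exact_mod_cast ha)
    calc bnd ≤ |bnd| := le_abs_self bnd
      _ = Real.sqrt (bnd ^ 2) := (Real.sqrt_sq_eq_abs bnd).symm
      _ ≤ Real.sqrt a := Real.sqrt_le_sqrt h1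
  have h0 : Filter.Tendsto (fun s : ℕ => 1 / Real.sqrt s) Filter.atTop (nhds 0) := by
    simp only [one_div]
    exact hsqatTop.inv_tendsto_atTop
  constructor
  · rw [← tendsto_sub_nhds_zero_iff]
    apply squeeze_zero_norm' _ h0
    rw [Filter.eventually_atTop]
    refine ⟨1, fun s hs => ?_⟩
    rw [Real.norm_eq_abs]
    exact hdev s hs
  · exact ⟨1, one_pos, fun s hs => by
      have := hdev s hs
      simpa using this⟩
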